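/- Let a ∈ ℝ and let λ ∈ ℂ satisfy λ ≠ −a and D_n(λ) ≠ 0 for all n ∈ ℤ, where D_n(λ) = λ² + n²λ + a(n² − a) + 1. Then there exists a constant K > 0 (depending on λ and a) such that for every n ∈ ℤ and every (f₁, f₂) ∈ ℂ², the 2×2 linear system (λ + n² − a)u₁ + u₂ = f₁, −u₁ + (λ + a)u₂ = f₂ has a unique solution (u₁, u₂) ∈ ℂ², and this solution satisfies n⁴·|u₁|² + |u₂|² ≤ K·(|f₁|² + |f₂|²). -/

import Mathlib

set_option maxHeartbeats 1000000 in
/-- Unique solvability and uniform a priori bound for the Fourier-block systems of the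
FitzHugh–Nagumo resolvent equation: if `λ ≠ -a` and `D_n(λ) ≠ 0` for all `n ∈ ℤ`, then each
2×2 system has a unique solution satisfying `n⁴|u₁|² + |u₂|² ≤ K(|f₁|² + |f₂|²)`. -/
theorem FN_fourier_block_bound (a : ℝ) (l : ℂ) (hl : l ≠ -(a : ℂ))
    (hD : ∀ n : ℤ, l ^ 2 + (n : ℂ) ^ 2 * l + (a : ℂ) * ((n : ℂ) ^ 2 - (a : ℂ)) + 1 ≠ 0) :
    ∃ K > (0 : ℝ), ∀ (n : ℤ) (f₁ f₂ : ℂ),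
      (∃! u : ℂ × ℂ,
        (l + (n : ℂ) ^ 2 - (a : ℂ)) * u.1 + u.2 = f₁ ∧ -u.1 + (l + (a : ℂ)) * u.2 = f₂) ∧
      ∀ u : ℂ × ℂ,
        ((l + (n : ℂ) ^ 2 - (a : ℂ)) * u.1 + u.2 = f₁ ∧ -u.1 + (l + (a : ℂ)) * u.2 = f₂) →
        (n : ℝ) ^ 4 * ‖u.1‖ ^ 2 + ‖u.2‖ ^ 2 ≤ K * (‖f₁‖ ^ 2 + ‖f₂‖ ^ 2) := by
  have hB : l + (a:ℂ) ≠ 0 := fun h => hl (eq_neg_of_add_eq_zero_left h)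
  set D : ℤ → ℂ := fun n => l ^ 2 + (n : ℂ) ^ 2 * l + (a : ℂ) * ((n : ℂ) ^ 2 - (a : ℂ)) + 1
    with hDdef
  have hDn : ∀ n : ℤ, D n ≠ 0 := hD
  have hdn : ∀ n : ℤ, 0 < ‖D n‖ := fun n => norm_pos_iff.mpr (hDn n)
  set b : ℝ := ‖l + (a:ℂ)‖ with hbdef
  have hb : 0 < b := norm_pos_iff.mpr hB
  set cc : ℝ := ‖l ^ 2 - (a:ℂ) ^ 2 + 1‖ with hccdef
  have hcc : 0 ≤ cc := norm_nonneg _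
  have habs : ∀ n : ℤ, ‖(n:ℂ)‖ = |(n:ℝ)| := by
    intro n
    rw [show ((n:ℂ)) = ((n:ℝ):ℂ) by push_cast; ring, Complex.norm_real, Real.norm_eq_abs]
  have hnsq : ∀ n : ℤ, ‖(n:ℂ) ^ 2 * (l + (a:ℂ))‖ = (n:ℝ) ^ 2 * b := by
    intro n
    rw [norm_mul, norm_pow, habs n, sq_abs]
  -- large n bound
  have hlarge : ∀ n : ℤ, cc + 1 ≤ (n:ℝ) ^ 2 * b →
      1 ≤ ‖D n‖ ∧ (n:ℝ) ^ 2 ≤ (1 + cc) / b * ‖D n‖ := by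
    intro n hn
    have h0 : (n:ℝ) ^ 2 * b ≤ ‖D n‖ + cc := by
      have e : (n:ℂ) ^ 2 * (l + (a:ℂ)) = D n - (l ^ 2 - (a:ℂ) ^ 2 + 1) := by
        simp only [hDdef]; ring
      calc (n:ℝ) ^ 2 * b = ‖D n - (l ^ 2 - (a:ℂ) ^ 2 + 1)‖ := by rw [← hnsq n, e]
        _ ≤ ‖D n‖ + cc := norm_sub_le _ _
    have h2 : 1 ≤ ‖D n‖ := by linarith
    refine ⟨h2, ?_⟩
    rw [div_mul_eq_mul_div, le_div_iff₀ hb]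
    nlinarith [h0, h2, hcc]
  -- small n: positive minimum over a finite set
  set M : ℕ := ⌈(cc + 1) / b⌉₊ with hMdef
  have hM : (cc + 1) / b ≤ (M:ℝ) := Nat.le_ceil _
  have hMb : cc + 1 ≤ (M:ℝ) * b := by
    rw [div_le_iff₀ hb] at hM; linarith
  have hS0 : (0:ℤ) ∈ Finset.Icc (-(M:ℤ)) (M:ℤ) := by simp
  set δ : ℝ := (Finset.Icc (-(M:ℤ)) (M:ℤ)).inf' ⟨0, hS0⟩ (fun n => ‖D n‖) with hδdef
  have hδ : 0 < δ := by
    rw [hδdef]; apply (Finset.lt_inf'_iff _).mpr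
    intro n _
    exact hdn n
  have hsmall : ∀ n : ℤ, n.natAbs ≤ M → δ ≤ ‖D n‖ := by
    intro n hn
    apply Finset.inf'_le
    simp only [Finset.mem_Icc]
    omega
  have hcastsq : ∀ n : ℤ, (n:ℝ) ^ 2 = (n.natAbs : ℝ) ^ 2 := by
    intro n
    rw [Nat.cast_natAbs, Int.cast_abs, sq_abs]
  have hbig : ∀ n : ℤ, ¬ n.natAbs ≤ M → cc + 1 ≤ (n:ℝ) ^ 2 * b := by
    intro n h
    have hnM : M + 1 ≤ n.natAbs := by omega
    have h1 : ((M:ℝ) + 1) ≤ (n.natAbs : ℝ) := by exact_mod_cast hnM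
    have hM0 : (0:ℝ) ≤ (M:ℝ) := Nat.cast_nonneg _
    have hsq : (M:ℝ) ≤ (n.natAbs : ℝ) ^ 2 := by nlinarith
    have := mul_le_mul_of_nonneg_right hsq hb.le
    rw [hcastsq n]
    linarith
  -- uniform bounds
  set R : ℝ := max ((M:ℝ) ^ 2 / δ) ((1 + cc) / b) with hRdef
  have hR0 : 0 ≤ R := le_trans (div_nonneg (sq_nonneg _) hδ.le) (le_max_left _ _)
  set T : ℝ := max (1 / δ) 1 with hTdef
  have hT1 : 1 ≤ T := le_max_right _ _
  have hn2 : ∀ n : ℤ, (n:ℝ) ^ 2 ≤ R * ‖D n‖ := by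
    intro n
    by_cases h : n.natAbs ≤ M
    · have hd := hsmall n h
      have hnM : (n:ℝ) ^ 2 ≤ (M:ℝ) ^ 2 := by
        have h1 : (n.natAbs : ℝ) ≤ (M:ℝ) := by exact_mod_cast h
        rw [hcastsq n]
        nlinarith [Nat.cast_nonneg (α := ℝ) n.natAbs]
      calc (n:ℝ) ^ 2 ≤ (M:ℝ) ^ 2 := hnM
        _ = (M:ℝ) ^ 2 / δ * δ := by field_simp
        _ ≤ (M:ℝ) ^ 2 / δ * ‖D n‖ :=
            mul_le_mul_of_nonneg_left hd (div_nonneg (sq_nonneg _) hδ.le)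
        _ ≤ R * ‖D n‖ := mul_le_mul_of_nonneg_right (le_max_left _ _) (hdn n).le
    · calc (n:ℝ) ^ 2 ≤ (1 + cc) / b * ‖D n‖ := (hlarge n (hbig n h)).2
        _ ≤ R * ‖D n‖ := mul_le_mul_of_nonneg_right (le_max_right _ _) (hdn n).le
  have hone : ∀ n : ℤ, 1 ≤ T * ‖D n‖ := by
    intro n
    by_cases h : n.natAbs ≤ M
    · have hd := hsmall n h
      calc (1:ℝ) = 1 / δ * δ := by field_simp
        _ ≤ 1 / δ * ‖D n‖ := mul_le_mul_of_nonneg_left hd (by positivity)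
        _ ≤ T * ‖D n‖ := mul_le_mul_of_nonneg_right (le_max_left _ _) (hdn n).le
    · have := (hlarge n (hbig n h)).1
      nlinarith [hT1, hdn n]
  -- the constant
  set C : ℝ := R * (b + 1) + T + (1 + T) / b with hCdef
  have hdivpos : 0 < (1 + T) / b := div_pos (by linarith) hb
  have hC : 0 < C := by
    rw [hCdef]
    have h1 : 0 ≤ R * (b + 1) := mul_nonneg hR0 (by linarith)
    linarith
  refine ⟨4 * C ^ 2 + 1, by positivity, ?_⟩
  intro n f₁ f₂
  -- Cramer solution
  have hsolve : ∀ u : ℂ × ℂ,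
      ((l + (n : ℂ) ^ 2 - (a : ℂ)) * u.1 + u.2 = f₁ ∧ -u.1 + (l + (a : ℂ)) * u.2 = f₂) →
      D n * u.1 = (l + (a:ℂ)) * f₁ - f₂ ∧ D n * u.2 = f₁ + (l + (n:ℂ) ^ 2 - (a:ℂ)) * f₂ := by
    rintro u ⟨h1, h2⟩
    constructor
    · simp only [hDdef]
      linear_combination (l + (a:ℂ)) * h1 - h2
    · simp only [hDdef]
      linear_combination h1 + (l + (n:ℂ) ^ 2 - (a:ℂ)) * h2
  constructor
  · -- existence and uniqueness
    refine ⟨(((l + (a:ℂ)) * f₁ - f₂) / D n, (f₁ + (l + (n:ℂ) ^ 2 - (a:ℂ)) * f₂) / D n),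
      ⟨?_, ?_⟩, ?_⟩
    · show (l + (n:ℂ) ^ 2 - (a:ℂ)) * ((((l + (a:ℂ)) * f₁ - f₂)) / D n) +
        (f₁ + (l + (n:ℂ) ^ 2 - (a:ℂ)) * f₂) / D n = f₁
      rw [← mul_div_assoc, ← add_div, div_eq_iff (hDn n)]
      simp only [hDdef]
      ring
    · show -((((l + (a:ℂ)) * f₁ - f₂)) / D n) +
        (l + (a:ℂ)) * ((f₁ + (l + (n:ℂ) ^ 2 - (a:ℂ)) * f₂) / D n) = f₂
      rw [← mul_div_assoc, ← neg_div, ← add_div, div_eq_iff (hDn n)]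
      simp only [hDdef]
      ring
    · rintro v hv
      obtain ⟨hv1, hv2⟩ := hsolve v hv
      have e1 : v.1 = ((l + (a:ℂ)) * f₁ - f₂) / D n := by
        rw [eq_div_iff (hDn n)]; linear_combination hv1
      have e2 : v.2 = (f₁ + (l + (n:ℂ) ^ 2 - (a:ℂ)) * f₂) / D n := by
        rw [eq_div_iff (hDn n)]; linear_combination hv2
      exact Prod.ext e1 e2
  · -- a priori bound
    rintro u hu
    obtain ⟨hu1, hu2⟩ := hsolve u hu
    have hnorm1 : ‖D n‖ * ‖u.1‖ ≤ b * ‖f₁‖ + ‖f₂‖ := by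
      rw [← norm_mul, hu1]
      calc ‖(l + (a:ℂ)) * f₁ - f₂‖ ≤ ‖(l + (a:ℂ)) * f₁‖ + ‖f₂‖ := norm_sub_le _ _
        _ = b * ‖f₁‖ + ‖f₂‖ := by rw [norm_mul]
    have hAbound : b * ‖l + (n:ℂ) ^ 2 - (a:ℂ)‖ ≤ ‖D n‖ + 1 := by
      have key : (l + (a:ℂ)) * (l + (n:ℂ) ^ 2 - (a:ℂ)) = D n - 1 := by
        simp only [hDdef]; ring
      have e : b * ‖l + (n:ℂ) ^ 2 - (a:ℂ)‖ = ‖D n - 1‖ := by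
        rw [← norm_mul, key]
      rw [e]
      calc ‖D n - 1‖ ≤ ‖D n‖ + ‖(1:ℂ)‖ := norm_sub_le _ _
        _ = ‖D n‖ + 1 := by rw [norm_one]
    have hnorm2 : ‖D n‖ * (b * ‖u.2‖) ≤ b * ‖f₁‖ + (‖D n‖ + 1) * ‖f₂‖ := by
      have e : ‖D n‖ * ‖u.2‖ = ‖f₁ + (l + (n:ℂ) ^ 2 - (a:ℂ)) * f₂‖ := by
        rw [← norm_mul, hu2]
      have h3 : ‖f₁ + (l + (n:ℂ) ^ 2 - (a:ℂ)) * f₂‖ ≤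
          ‖f₁‖ + ‖l + (n:ℂ) ^ 2 - (a:ℂ)‖ * ‖f₂‖ := by
        calc ‖f₁ + (l + (n:ℂ) ^ 2 - (a:ℂ)) * f₂‖
            ≤ ‖f₁‖ + ‖(l + (n:ℂ) ^ 2 - (a:ℂ)) * f₂‖ := norm_add_le _ _
          _ = ‖f₁‖ + ‖l + (n:ℂ) ^ 2 - (a:ℂ)‖ * ‖f₂‖ := by rw [norm_mul]
      nlinarith [e, h3, hAbound, norm_nonneg f₂, hb, norm_nonneg f₁]
    -- bounds on X = n²‖u₁‖ and ‖u₂‖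
    have hX : (n:ℝ) ^ 2 * ‖u.1‖ ≤ R * (b * ‖f₁‖ + ‖f₂‖) := by
      nlinarith [mul_le_mul_of_nonneg_right (hn2 n) (norm_nonneg u.1),
        mul_le_mul_of_nonneg_left hnorm1 hR0]
    have hY : b * ‖u.2‖ ≤ b * T * ‖f₁‖ + (1 + T) * ‖f₂‖ := by
      have key : ‖D n‖ * (b * ‖u.2‖) ≤ ‖D n‖ * (b * T * ‖f₁‖ + (1 + T) * ‖f₂‖) := by
        nlinarith [hnorm2, hone n,
          mul_nonneg (sub_nonneg.mpr (hone n)) (mul_nonneg hb.le (norm_nonneg f₁)),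
          mul_nonneg (sub_nonneg.mpr (hone n)) (norm_nonneg f₂)]
      exact le_of_mul_le_mul_left key (hdn n)
    have hX' : (n:ℝ) ^ 2 * ‖u.1‖ ≤ C * (‖f₁‖ + ‖f₂‖) := by
      have h1 : R * (b * ‖f₁‖ + ‖f₂‖) ≤ R * (b + 1) * (‖f₁‖ + ‖f₂‖) := by
        nlinarith [mul_nonneg hR0 (norm_nonneg f₁),
          mul_nonneg hR0 (mul_nonneg hb.le (norm_nonneg f₂))]
      have h2 : R * (b + 1) * (‖f₁‖ + ‖f₂‖) ≤ C * (‖f₁‖ + ‖f₂‖) := by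
        apply mul_le_mul_of_nonneg_right _ (by positivity)
        rw [hCdef]; linarith
      linarith [hX]
    have hY' : ‖u.2‖ ≤ C * (‖f₁‖ + ‖f₂‖) := by
      have key : b * ‖u.2‖ ≤ b * (C * (‖f₁‖ + ‖f₂‖)) := by
        have hbC : b * ((1 + T) / b) = 1 + T := mul_div_cancel₀ _ hb.ne'
        have expand : b * (C * (‖f₁‖ + ‖f₂‖)) =
            (b * (R * (b + 1)) + b * T + (1 + T)) * (‖f₁‖ + ‖f₂‖) := by
          rw [hCdef]; linear_combination (‖f₁‖ + ‖f₂‖) * hbC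
        rw [expand]
        nlinarith [hY, mul_nonneg (mul_nonneg hb.le hR0) (by linarith [hb] : (0:ℝ) ≤ b + 1),
          norm_nonneg f₁, norm_nonneg f₂, hb, hT1,
          mul_nonneg hb.le (mul_nonneg (le_trans zero_le_one hT1) (norm_nonneg f₂))]
      exact le_of_mul_le_mul_left key hb
    have hXnn : 0 ≤ (n:ℝ) ^ 2 * ‖u.1‖ := mul_nonneg (sq_nonneg _) (norm_nonneg _)
    have h4 : (n:ℝ) ^ 4 * ‖u.1‖ ^ 2 = ((n:ℝ) ^ 2 * ‖u.1‖) ^ 2 := by ring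
    rw [h4]
    have hX2 : ((n:ℝ) ^ 2 * ‖u.1‖) ^ 2 ≤ (C * (‖f₁‖ + ‖f₂‖)) ^ 2 :=
      pow_le_pow_left₀ hXnn hX' 2
    have hY2 : ‖u.2‖ ^ 2 ≤ (C * (‖f₁‖ + ‖f₂‖)) ^ 2 := pow_le_pow_left₀ (norm_nonneg _) hY' 2
    nlinarith [hX2, hY2, mul_nonneg (sq_nonneg C) (sq_nonneg (‖f₁‖ - ‖f₂‖)),
      sq_nonneg (‖f₁‖ - ‖f₂‖), norm_nonneg f₁, norm_nonneg f₂, sq_nonneg C]
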